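/- The implementation A has a helping supervalent finite execution, i.e., a supervalent execution α such that for every competitors-only extension β of α, the execution αβp (β followed by the next step of the referee p) is closed. -/

import Mathlib

set_option autoImplicit false

/-! ## Base objects and primitives -/

/-- A base object: a shared-memory object accessed via atomic primitives.
Responses of primitives are encoded as lists of naturals. -/
structure BaseObject : Type 1 where
  State : Type
  init : State
  Prim : Type
  apply : Prim → State → State × List ℕ

/-- A base object has *interfering* primitives if at any state, the application of
any pair of primitives either commutes or one overwrites the other. -/
def Interfering (B : BaseObject) : Prop :=
  ∀ (f g : B.Prim) (s : B.State),
    (B.apply g (B.apply f s).1).1 = (B.apply f (B.apply g s).1).1 ∨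
    (B.apply f (B.apply g s).1).1 = (B.apply f s).1 ∨
    (B.apply g (B.apply f s).1).1 = (B.apply g s).1

/-- A read/write register: primitive `some v` writes `v`, primitive `none` reads. -/
def RWRegister : BaseObject where
  State := ℕ
  init := 0
  Prim := Option ℕ
  apply := fun p s =>
    match p with
    | some v => (v, [])
    | none => (s, [s])

/-- A `w`-window register stores the sequence of the last `w` values written to it;
`some v` appends `v` (dropping the oldest value if the length exceeds `w`),
`none` reads the stored sequence. -/
def WindowRegister (w : ℕ) : BaseObject where
  State := List ℕ
  init := []
  Prim := Option ℕ
  apply := fun p s =>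
    match p with
    | some v => ((s ++ [v]).drop (s.length + 1 - w), [])
    | none => (s, s)

/-- A test&set object: `T&S()` atomically sets the bit and returns the previous value. -/
def TestAndSet : BaseObject where
  State := Bool
  init := false
  Prim := Unit
  apply := fun _ s => (true, [if s then 1 else 0])

/-! ## Sequential specifications -/

/-- A (possibly nondeterministic) sequential specification for `n` processes.
`δ s i op s' r` holds if process `i` invoking `op` in state `s` may move the object
to state `s'` returning `r`.  `allowed i hist op` says whether process `i`, having
already invoked the operations `hist`, may invoke `op` (used to express one-shot
objects and the referee/competitor roles). -/
structure Spec (n : ℕ) : Type 1 where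
  Op : Type
  Res : Type
  State : Type
  init : State
  δ : State → Fin n → Op → State → Res → Prop
  allowed : Fin n → List Op → Op → Bool

/-- Valid sequential executions of a specification, starting at a given state. -/
inductive SeqRun {n : ℕ} (S : Spec n) : S.State → List (Fin n × S.Op × S.Res) → Prop
  | nil (s : S.State) : SeqRun S s []
  | cons {s : S.State} {i : Fin n} {op : S.Op} {s' : S.State} {r : S.Res}
      {l : List (Fin n × S.Op × S.Res)} :
      S.δ s i op s' r → SeqRun S s' l → SeqRun S s ((i, op, r) :: l)

/-! ## Implementations, configurations and executions -/

/-- Events of an execution: high-level invocations/responses and primitive steps. -/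
inductive Event (n : ℕ) (S : Spec n) : Type
  | inv (i : Fin n) (op : S.Op)
  | res (i : Fin n) (r : S.Res)
  | step (i : Fin n)

/-- The process performing an event. -/
def Event.proc {n : ℕ} {S : Spec n} : Event n S → Fin n
  | .inv i _ => i
  | .res i _ => i
  | .step i => i

/-- An implementation of the high-level object `S` for `n` processes from base objects
`M o`, `o : ι`: a deterministic state machine per process.  In local state `ℓ`,
process `i`'s next primitive step applies `prim i ℓ` to base object `obj i ℓ` and
updates the local state with the response via `updL`; `ret i ℓ` is the response of the
current high-level operation once it is ready. -/
structure Impl (n : ℕ) (S : Spec n) (ι : Type) (M : ι → BaseObject) : Type 1 where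
  Local : Fin n → Type
  initL : ∀ i, Local i
  invokeL : ∀ i, S.Op → Local i → Local i
  obj : ∀ i, Local i → ι
  prim : ∀ i (ℓ : Local i), (M (obj i ℓ)).Prim
  updL : ∀ i, Local i → List ℕ → Local i
  ret : ∀ i, Local i → Option S.Res

/-- A configuration: states of all base objects and all processes
(local state, pending operation, history of invoked operations). -/
structure Config {n : ℕ} {S : Spec n} {ι : Type} {M : ι → BaseObject}
    (A : Impl n S ι M) : Type where
  mem : ∀ o, (M o).State
  loc : ∀ i, A.Local i
  pend : Fin n → Option S.Op
  hist : Fin n → List S.Op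

open Classical in
/-- Update the state of one base object in the memory. -/
noncomputable def updMem {ι : Type} {M : ι → BaseObject}
    (mem : ∀ o, (M o).State) (o : ι) (s : (M o).State) : ∀ o', (M o').State :=
  fun o' =>
    if h : o' = o then cast (congrArg (fun x => (M x).State) h).symm s else mem o'

open Classical in
/-- The (deterministic) transition of a configuration by an event; `none` if the event
is not enabled.  An invocation requires the process to be idle and the operation to be
allowed by the specification; a primitive step requires a pending operation whose
response is not yet ready; a response requires the response to be ready. -/
noncomputable def nextConfig {n : ℕ} {S : Spec n} {ι : Type} {M : ι → BaseObject}
    (A : Impl n S ι M) (C : Config A) : Event n S → Option (Config A)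
  | .inv i op =>
    match C.pend i with
    | some _ => none
    | none =>
      if S.allowed i (C.hist i) op then
        some { C with
          pend := Function.update C.pend i (some op)
          hist := Function.update C.hist i (C.hist i ++ [op])
          loc := Function.update C.loc i (A.invokeL i op (C.loc i)) }
      else none
  | .step i =>
    match C.pend i with
    | none => none
    | some _ =>
      if A.ret i (C.loc i) = none then
        some { C with
          mem := updMem C.mem (A.obj i (C.loc i))
            ((M (A.obj i (C.loc i))).apply (A.prim i (C.loc i))
              (C.mem (A.obj i (C.loc i)))).1
          loc := Function.update C.loc i
            (A.updL i (C.loc i)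
              ((M (A.obj i (C.loc i))).apply (A.prim i (C.loc i))
                (C.mem (A.obj i (C.loc i)))).2) }
      else none
  | .res i r =>
    match C.pend i with
    | none => none
    | some _ =>
      if A.ret i (C.loc i) = some r then
        some { C with pend := Function.update C.pend i none }
      else none

/-- The initial configuration. -/
def initConfig {n : ℕ} {S : Spec n} {ι : Type} {M : ι → BaseObject}
    (A : Impl n S ι M) : Config A :=
  { mem := fun o => (M o).init
    loc := fun i => A.initL i
    pend := fun _ => none
    hist := fun _ => [] }

/-- The configuration reached by a finite sequence of events from the initial
configuration (`none` if the sequence is not a valid execution). -/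
noncomputable def execConfig {n : ℕ} {S : Spec n} {ι : Type} {M : ι → BaseObject}
    (A : Impl n S ι M) (α : List (Event n S)) : Option (Config A) :=
  α.foldlM (fun C e => nextConfig A C e) (initConfig A)

/-- `α` is a (finite) execution of the implementation `A`. -/
def IsExec {n : ℕ} {S : Spec n} {ι : Type} {M : ι → BaseObject}
    (A : Impl n S ι M) (α : List (Event n S)) : Prop :=
  (execConfig A α).isSome = true

/-- The length-`m` prefix of an infinite sequence of events. -/
def prefE {n : ℕ} {S : Spec n} (E : ℕ → Event n S) (m : ℕ) : List (Event n S) :=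
  (List.range m).map E

/-! ## Linearizability -/

/-- In execution `α`, the invocation at position `j` is matched by the response at
position `k` with output `r` (no earlier response of the same process intervening). -/
def Matches {n : ℕ} {S : Spec n} (α : List (Event n S)) (j k : ℕ) (r : S.Res) : Prop :=
  ∃ i op, α[j]? = some (Event.inv i op) ∧ α[k]? = some (Event.res i r) ∧ j < k ∧
    ∀ m, j < m → m < k → ∀ r', α[m]? ≠ some (Event.res i r')

/-- The operation invoked at position `j` precedes (returns before the invocation of)
the operation invoked at position `j'`. -/
def Precedes {n : ℕ} {S : Spec n} (α : List (Event n S)) (j j' : ℕ) : Prop :=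
  ∃ k r, Matches α j k r ∧ k < j'

/-- `σ` is a linearization of the execution `α`: a sequence of operation instances of
`α` (identified by the position of their invocation, paired with a response) that
contains every complete operation of `α` with its actual output and possibly some
pending ones, respects the real-time order of `α`, and is a valid sequential
execution of the specification. -/
structure IsLinearization {n : ℕ} (S : Spec n) (α : List (Event n S))
    (σ : List (ℕ × S.Res)) : Prop where
  inv_mem : ∀ p ∈ σ, ∃ i op, α[p.1]? = some (Event.inv i op)
  nodup : (σ.map Prod.fst).Nodup
  complete_mem : ∀ j k r, Matches α j k r → (j, r) ∈ σ
  complete_out : ∀ j k r r', Matches α j k r → (j, r') ∈ σ → r' = r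
  realtime : σ.Pairwise (fun a b => ¬ Precedes α b.1 a.1)
  valid : ∃ l : List (Fin n × S.Op × S.Res),
    List.Forall₂ (fun (p : ℕ × S.Res) (e : Fin n × S.Op × S.Res) =>
      α[p.1]? = some (Event.inv e.1 e.2.1) ∧ p.2 = e.2.2) σ l ∧
    SeqRun S S.init l

/-- `L` is a linearization function for `A`: it maps every execution to a
linearization of it. -/
def IsLinFun {n : ℕ} {S : Spec n} {ι : Type} {M : ι → BaseObject}
    (A : Impl n S ι M) (L : List (Event n S) → List (ℕ × S.Res)) : Prop :=
  ∀ α, IsExec A α → IsLinearization S α (L α)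

/-- `L` is prefix-closed: the linearization of a prefix is a prefix of the
linearization of an extension. -/
def PrefixClosedLin {n : ℕ} {S : Spec n} {ι : Type} {M : ι → BaseObject}
    (A : Impl n S ι M) (L : List (Event n S) → List (ℕ × S.Res)) : Prop :=
  ∀ α β, IsExec A (α ++ β) → L α <+: L (α ++ β)

/-- `L` is subsequence-closed: the linearization of a prefix is a subsequence of the
linearization of an extension. -/
def SubseqClosedLin {n : ℕ} {S : Spec n} {ι : Type} {M : ι → BaseObject}
    (A : Impl n S ι M) (L : List (Event n S) → List (ℕ × S.Res)) : Prop :=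
  ∀ α β, IsExec A (α ++ β) → List.Sublist (L α) (L (α ++ β))

/-- Strong linearizability: there is a prefix-closed linearization function. -/
def StronglyLinearizable {n : ℕ} {S : Spec n} {ι : Type} {M : ι → BaseObject}
    (A : Impl n S ι M) : Prop :=
  ∃ L, IsLinFun A L ∧ PrefixClosedLin A L

/-- Decisive linearizability: there is a subsequence-closed linearization function. -/
def DecisivelyLinearizable {n : ℕ} {S : Spec n} {ι : Type} {M : ι → BaseObject}
    (A : Impl n S ι M) : Prop :=
  ∃ L, IsLinFun A L ∧ SubseqClosedLin A L

/-! ## Progress conditions -/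

/-- Wait-freedom: in every infinite execution, a process that takes infinitely many
primitive steps completes infinitely many operations. -/
def WaitFree {n : ℕ} {S : Spec n} {ι : Type} {M : ι → BaseObject}
    (A : Impl n S ι M) : Prop :=
  ∀ E : ℕ → Event n S, (∀ m, IsExec A (prefE E m)) →
    ∀ i : Fin n, (∀ m, ∃ m', m ≤ m' ∧ E m' = Event.step i) →
      ∀ m, ∃ m', m ≤ m' ∧ ∃ r, E m' = Event.res i r

/-- Lock-freedom: in every infinite execution, infinitely many operations complete. -/
def LockFree {n : ℕ} {S : Spec n} {ι : Type} {M : ι → BaseObject}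
    (A : Impl n S ι M) : Prop :=
  ∀ E : ℕ → Event n S, (∀ m, IsExec A (prefE E m)) →
    ∀ m, ∃ m', m ≤ m' ∧ ∃ i r, E m' = Event.res i r

/-! ## High-level object specifications -/

/-- Queue: operation `some v` is `enqueue(v)` (returning `none`), operation `none` is
`dequeue()`, returning the oldest enqueued value not yet dequeued (`some v`) or
`none` (empty). -/
def QueueSpec (n : ℕ) : Spec n where
  Op := Option ℕ
  Res := Option ℕ
  State := List ℕ
  init := []
  δ := fun s _ op s' r =>
    (∃ v, op = some v ∧ s' = s ++ [v] ∧ r = none) ∨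
    (op = none ∧ ((s = [] ∧ s' = [] ∧ r = none) ∨ ∃ v t, s = v :: t ∧ s' = t ∧ r = some v))
  allowed := fun _ _ _ => true

/-- Stack: operation `some v` is `push(v)` (returning `none`), operation `none` is
`pop()`, returning the most recently pushed value not yet popped (`some v`) or
`none` (empty). -/
def StackSpec (n : ℕ) : Spec n where
  Op := Option ℕ
  Res := Option ℕ
  State := List ℕ
  init := []
  δ := fun s _ op s' r =>
    (∃ v, op = some v ∧ s' = v :: s ∧ r = none) ∨
    (op = none ∧ ((s = [] ∧ s' = [] ∧ r = none) ∨ ∃ v t, s = v :: t ∧ s' = t ∧ r = some v))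
  allowed := fun _ _ _ => true

/-- Operations of the (one-shot or long-lived) contest objects. -/
inductive ContestOp : Type
  | compete
  | decide

/-- The one-shot contest object for `n` processes: each competitor `p_1, …, p_{n-1}`
may invoke `compete()` once, which always returns `true`; the referee `p_0` may invoke
`decide()` once, which returns the index of the first process that executed
`compete()` (`Sum.inr i`) or `false` (`Sum.inl false`) if there is no such operation. -/
def ContestSpec (n : ℕ) : Spec n where
  Op := ContestOp
  Res := Bool ⊕ ℕ
  State := Option (Fin n) × Bool
  init := (none, false)
  δ := fun s i op s' r =>
    (op = ContestOp.compete ∧ i.val ≠ 0 ∧ r = Sum.inl true ∧ s'.2 = s.2 ∧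
      s'.1 = (match s.1 with | some j => some j | none => some i)) ∨
    (op = ContestOp.decide ∧ i.val = 0 ∧ s.2 = false ∧ s' = (s.1, true) ∧
      r = (match s.1 with | some j => Sum.inr j.val | none => Sum.inl false))
  allowed := fun i hist op =>
    hist.isEmpty &&
      (match op with
       | ContestOp.compete => i.val != 0
       | ContestOp.decide => i.val == 0)

/-- The long-lived contest object for `n` processes: each competitor `p_1, …, p_{n-1}`
may invoke `compete()` any number of times (returning nothing, i.e. `none`); the
referee `p_0` may invoke `decide()` at most once, which returns `some x` for some
integer `x` such that every competitor has executed at most `x` operations so far. -/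
def LLContestSpec (n : ℕ) : Spec n where
  Op := ContestOp
  Res := Option ℕ
  State := (Fin n → ℕ) × Bool
  init := (fun _ => 0, false)
  δ := fun s i op s' r =>
    (op = ContestOp.compete ∧ i.val ≠ 0 ∧
      s' = (Function.update s.1 i (s.1 i + 1), s.2) ∧ r = none) ∨
    (op = ContestOp.decide ∧ i.val = 0 ∧ s.2 = false ∧ s'.2 = true ∧ s'.1 = s.1 ∧
      ∃ x : ℕ, r = some x ∧ ∀ j : Fin n, j.val ≠ 0 → s.1 j ≤ x)
  allowed := fun i hist op =>
    match op with
    | ContestOp.compete => i.val != 0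
    | ContestOp.decide => (i.val == 0) && hist.isEmpty

/-- Counter: operation `true` is `increment()` (returning `none`), operation `false`
is `read()`, returning the number of increments so far. -/
def CounterSpec (n : ℕ) : Spec n where
  Op := Bool
  Res := Option ℕ
  State := ℕ
  init := 0
  δ := fun s _ op s' r =>
    (op = true ∧ s' = s + 1 ∧ r = none) ∨ (op = false ∧ s' = s ∧ r = some s)
  allowed := fun _ _ _ => true

/-- Max register: operation `some v` is `maxWrite(v)` (returning `none`), operation
`none` is `maxRead()`, returning the largest value written so far. -/
def MaxRegSpec (n : ℕ) : Spec n where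
  Op := Option ℕ
  Res := Option ℕ
  State := ℕ
  init := 0
  δ := fun s _ op s' r =>
    (∃ v, op = some v ∧ s' = max s v ∧ r = none) ∨ (op = none ∧ s' = s ∧ r = some s)
  allowed := fun _ _ _ => true

/-- Snapshot with `n` components: operation `Sum.inl (j, v)` atomically updates
component `j` to `v` (returning `none`); operation `Sum.inr ()` is `scan()`,
atomically returning all components. -/
def SnapshotSpec (n : ℕ) : Spec n where
  Op := (Fin n × ℕ) ⊕ Unit
  Res := Option (Fin n → ℕ)
  State := Fin n → ℕ
  init := fun _ => 0
  δ := fun s _ op s' r =>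
    (∃ j v, op = Sum.inl (j, v) ∧ s' = Function.update s j v ∧ r = none) ∨
    (op = Sum.inr () ∧ s' = s ∧ r = some s)
  allowed := fun _ _ _ => true

/-- Fetch&increment: atomically returns the current value and increments it. -/
def FetchIncSpec (n : ℕ) : Spec n where
  Op := Unit
  Res := ℕ
  State := ℕ
  init := 0
  δ := fun s _ _ s' r => s' = s + 1 ∧ r = s
  allowed := fun _ _ _ => true

/-- Fetch&add: `fetch&add(v)` atomically returns the current value and adds `v`. -/
def FetchAddSpec (n : ℕ) : Spec n where
  Op := ℕ
  Res := ℕ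
  State := ℕ
  init := 0
  δ := fun s _ op s' r => s' = s + op ∧ r = s
  allowed := fun _ _ _ => true

/-! ## Valency machinery for the long-lived contest object -/

/-- A sequence of events involves only the competitors `p_1, …, p_{n-1}`. -/
def CompetitorsOnly {n : ℕ} {S : Spec n} (β : List (Event n S)) : Prop :=
  ∀ e ∈ β, (Event.proc e).val ≠ 0

/-- `decide()` appears in the linearization `L α` with output `x`. -/
def DecidesVal {n : ℕ}
    (L : List (Event n (LLContestSpec n)) → List (ℕ × (LLContestSpec n).Res))
    (α : List (Event n (LLContestSpec n))) (x : ℕ) : Prop :=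
  ∃ j : ℕ, ∃ i : Fin n, i.val = 0 ∧
    α[j]? = some (Event.inv i ContestOp.decide) ∧ (j, (some x : Option ℕ)) ∈ L α

/-- The competitors-valency `W(α)`: all `x` such that some finite competitors-only
extension `β` of `α` has `decide()` appearing in `L(αβ)` with output `x`. -/
def Wset {n : ℕ} {ι : Type} {M : ι → BaseObject} (A : Impl n (LLContestSpec n) ι M)
    (L : List (Event n (LLContestSpec n)) → List (ℕ × (LLContestSpec n).Res))
    (α : List (Event n (LLContestSpec n))) : Set ℕ :=
  { x | ∃ β, CompetitorsOnly β ∧ IsExec A (α ++ β) ∧ DecidesVal L (α ++ β) x }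

/-- `α` is competitors-closed: every infinite competitors-only extension of `α` has a
finite prefix `β` such that `decide()` appears in `L(αβ)`. -/
def ClosedExec {n : ℕ} {ι : Type} {M : ι → BaseObject} (A : Impl n (LLContestSpec n) ι M)
    (L : List (Event n (LLContestSpec n)) → List (ℕ × (LLContestSpec n).Res))
    (α : List (Event n (LLContestSpec n))) : Prop :=
  ∀ E : ℕ → Event n (LLContestSpec n),
    (∀ m, (Event.proc (E m)).val ≠ 0) →
    (∀ m, IsExec A (α ++ prefE E m)) →
    ∃ m x, DecidesVal L (α ++ prefE E m) x

/-- `α` is competitors-supervalent: not competitors-closed. -/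
def SupervalentExec {n : ℕ} {ι : Type} {M : ι → BaseObject}
    (A : Impl n (LLContestSpec n) ι M)
    (L : List (Event n (LLContestSpec n)) → List (ℕ × (LLContestSpec n).Res))
    (α : List (Event n (LLContestSpec n))) : Prop :=
  ¬ ClosedExec A L α

/-- The next event of process `r` in configuration `C` of an implementation of the
long-lived contest object: invoke its (unique) operation if idle, respond if the
response is ready, and otherwise take its next primitive step. -/
noncomputable def llNextEvent {n : ℕ} {ι : Type} {M : ι → BaseObject}
    (A : Impl n (LLContestSpec n) ι M) (C : Config A) (r : Fin n) :
    Event n (LLContestSpec n) :=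
  match C.pend r with
  | none => Event.inv r (if r.val = 0 then ContestOp.decide else ContestOp.compete)
  | some _ =>
    match A.ret r (C.loc r) with
    | some v => Event.res r v
    | none => Event.step r

/-- `α` extended by the next step of process `r` (written `αr` in the paper);
`α` is left unchanged if `r` has no enabled next step. -/
noncomputable def sched1 {n : ℕ} {ι : Type} {M : ι → BaseObject}
    (A : Impl n (LLContestSpec n) ι M) (α : List (Event n (LLContestSpec n)))
    (r : Fin n) : List (Event n (LLContestSpec n)) :=
  match execConfig A α with
  | none => α
  | some C =>
    match nextConfig A C (llNextEvent A C r) with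
    | none => α
    | some _ => α ++ [llNextEvent A C r]

/-- `α` extended by scheduling the listed processes, each taking its next step in
order; e.g. `sched A α [q, p]` is the execution `αqp` of the paper. -/
noncomputable def sched {n : ℕ} {ι : Type} {M : ι → BaseObject}
    (A : Impl n (LLContestSpec n) ι M) :
    List (Event n (LLContestSpec n)) → List (Fin n) → List (Event n (LLContestSpec n))
  | α, [] => α
  | α, r :: rs => sched A (sched1 A α r) rs

/-- The final configurations of executions `α` and `α'` are indistinguishable to
process `r`: all base objects have the same states, and `r` is in the same state. -/
def ExecIndistTo {n : ℕ} {S : Spec n} {ι : Type} {M : ι → BaseObject}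
    (A : Impl n S ι M) (α α' : List (Event n S)) (r : Fin n) : Prop :=
  ∃ C C', execConfig A α = some C ∧ execConfig A α' = some C' ∧
    C.mem = C'.mem ∧ C.loc r = C'.loc r ∧ C.pend r = C'.pend r ∧ C.hist r = C'.hist r
section HelpingAux

variable {n : ℕ} {ι : Type} {M : ι → BaseObject} {S : Spec n}

theorem execConfig_append (A : Impl n S ι M) (α β : List (Event n S)) :
    execConfig A (α ++ β) =
      (execConfig A α).bind (fun C => β.foldlM (fun C e => nextConfig A C e) C) := by
  simp [execConfig, List.foldlM_append]

theorem execConfig_concat (A : Impl n S ι M) (α : List (Event n S)) (e : Event n S) :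
    execConfig A (α ++ [e]) = (execConfig A α).bind (fun C => nextConfig A C e) := by
  rw [execConfig_append]
  cases execConfig A α <;> simp [List.foldlM]

theorem isExec_append_left {A : Impl n S ι M} {α β : List (Event n S)}
    (h : IsExec A (α ++ β)) : IsExec A α := by
  unfold IsExec at *
  rw [execConfig_append] at h
  cases hx : execConfig A α <;> rw [hx] at h <;> simp_all

theorem nextConfig_inv_eq {A : Impl n S ι M} {C C' : Config A} {i : Fin n} {op : S.Op}
    (h : nextConfig A C (.inv i op) = some C') :
    C.pend i = none ∧ S.allowed i (C.hist i) op = true ∧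
      C' = { C with pend := Function.update C.pend i (some op),
                    hist := Function.update C.hist i (C.hist i ++ [op]),
                    loc := Function.update C.loc i (A.invokeL i op (C.loc i)) } := by
  cases hp : C.pend i <;> simp only [nextConfig, hp] at h
  · split at h
    · exact ⟨rfl, by assumption, (Option.some_inj.mp h).symm⟩
    · simp at h
  · simp at h

theorem nextConfig_res_eq {A : Impl n S ι M} {C C' : Config A} {i : Fin n} {r : S.Res}
    (h : nextConfig A C (.res i r) = some C') :
    (∃ op, C.pend i = some op) ∧ A.ret i (C.loc i) = some r ∧
      C' = { C with pend := Function.update C.pend i none } := by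
  cases hp : C.pend i <;> simp only [nextConfig, hp] at h
  · simp at h
  · split at h
    · exact ⟨⟨_, rfl⟩, by assumption, (Option.some_inj.mp h).symm⟩
    · simp at h

theorem nextConfig_step_eq {A : Impl n S ι M} {C C' : Config A} {i : Fin n}
    (h : nextConfig A C (.step i) = some C') :
    C'.pend = C.pend ∧ C'.hist = C.hist := by
  cases hp : C.pend i <;> simp only [nextConfig, hp] at h
  · simp at h
  · split at h
    · cases (Option.some_inj.mp h).symm ; exact ⟨rfl, rfl⟩
    · simp at h


theorem execConfig_some_of_concat {A : Impl n S ι M} {α : List (Event n S)} {e : Event n S}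
    {C : Config A} (h : execConfig A (α ++ [e]) = some C) :
    ∃ C0, execConfig A α = some C0 ∧ nextConfig A C0 e = some C := by
  rw [execConfig_concat] at h
  cases hx : execConfig A α <;> rw [hx] at h
  · simp at h
  · exact ⟨_, rfl, h⟩

theorem pend_some_lastInv (A : Impl n S ι M) (α : List (Event n S)) :
    ∀ C, execConfig A α = some C → ∀ i op, C.pend i = some op →
      ∃ j : ℕ, α[j]? = some (Event.inv i op) ∧
        ∀ m : ℕ, j < m → ∀ r' : S.Res, α[m]? ≠ some (Event.res i r') := by
  induction α using List.reverseRecOn with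
  | nil =>
    intro C hC i op hp
    simp only [execConfig, List.foldlM] at hC
    cases (Option.some_inj.mp hC).symm
    simp [initConfig] at hp
  | append_singleton α e ih =>
    intro C hC i op hp
    obtain ⟨C0, hC0, hnc⟩ := execConfig_some_of_concat hC
    have hext : ∀ j, α[j]? = some (Event.inv i op) →
        (∀ m : ℕ, j < m → ∀ r' : S.Res, α[m]? ≠ some (Event.res i r')) →
        (∀ i' r', e = Event.res i' r' → i' ≠ i) →
        ∃ j : ℕ, (α ++ [e])[j]? = some (Event.inv i op) ∧
          ∀ m : ℕ, j < m → ∀ r' : S.Res, (α ++ [e])[m]? ≠ some (Event.res i r') := by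
      intro j hj hno hne
      have hjlt : j < α.length := (List.getElem?_eq_some_iff.mp hj).1
      refine ⟨j, by rw [List.getElem?_append_left hjlt]; exact hj, ?_⟩
      intro m hm r'
      rcases lt_trichotomy m α.length with h' | h' | h'
      · rw [List.getElem?_append_left h']; exact hno m hm r'
      · subst h'
        rw [List.getElem?_concat_length]
        intro hc
        exact hne i r' (Option.some_inj.mp hc) rfl
      · rw [List.getElem?_eq_none (by simp; omega)]
        simp
    cases e with
    | inv i' op' =>
      obtain ⟨hpend0, hall, rfl⟩ := nextConfig_inv_eq hnc
      by_cases hii : i = i'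
      · subst hii
        simp only [Function.update_self] at hp
        cases Option.some_inj.mp hp
        refine ⟨α.length, by rw [List.getElem?_concat_length], ?_⟩
        intro m hm r'
        rw [List.getElem?_eq_none (by simp; omega)]
        simp
      · simp only [Function.update_of_ne hii] at hp
        obtain ⟨j, hj, hno⟩ := ih C0 hC0 i op hp
        exact hext j hj hno (by intro i' r' hc; cases hc)
    | res i' r =>
      obtain ⟨_, hret, rfl⟩ := nextConfig_res_eq hnc
      by_cases hii : i = i'
      · subst hii; simp [Function.update_self] at hp
      · simp only [Function.update_of_ne hii] at hp
        obtain ⟨j, hj, hno⟩ := ih C0 hC0 i op hp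
        refine hext j hj hno ?_
        intro i'' r'' hc
        cases hc
        exact fun h' => hii h'.symm
    | step i' =>
      obtain ⟨hpend, _⟩ := nextConfig_step_eq hnc
      rw [hpend] at hp
      obtain ⟨j, hj, hno⟩ := ih C0 hC0 i op hp
      exact hext j hj hno (by intro i'' r'' hc; cases hc)

theorem pend_none_hist_nil (A : Impl n S ι M) (α : List (Event n S)) :
    ∀ C, execConfig A α = some C → ∀ i, (∀ r' : S.Res, Event.res i r' ∉ α) →
      C.pend i = none → C.hist i = [] ∧ ∀ op, Event.inv i op ∉ α := by
  induction α using List.reverseRecOn with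
  | nil =>
    intro C hC i _ _
    simp only [execConfig, List.foldlM] at hC
    cases (Option.some_inj.mp hC).symm
    exact ⟨rfl, by simp⟩
  | append_singleton α e ih =>
    intro C hC i hnores hp
    obtain ⟨C0, hC0, hnc⟩ := execConfig_some_of_concat hC
    have hnores0 : ∀ r' : S.Res, Event.res i r' ∉ α := fun r' hm =>
      hnores r' (List.mem_append_left _ hm)
    cases e with
    | inv i' op' =>
      obtain ⟨hpend0, hall, rfl⟩ := nextConfig_inv_eq hnc
      by_cases hii : i = i'
      · subst hii; simp [Function.update_self] at hp
      · simp only [Function.update_of_ne hii] at hp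
        obtain ⟨h1, h2⟩ := ih C0 hC0 i hnores0 hp
        refine ⟨by simpa [Function.update_of_ne hii] using h1, ?_⟩
        intro op hm
        rcases List.mem_append.mp hm with hm | hm
        · exact h2 op hm
        · simp only [List.mem_singleton, Event.inv.injEq] at hm
          exact hii hm.1
    | res i' r =>
      obtain ⟨_, hret, rfl⟩ := nextConfig_res_eq hnc
      by_cases hii : i = i'
      · exact absurd (by subst hii; exact List.mem_append_right _ (by simp))
          (hnores r)
      · simp only [Function.update_of_ne hii] at hp
        obtain ⟨h1, h2⟩ := ih C0 hC0 i hnores0 hp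
        refine ⟨h1, ?_⟩
        intro op hm
        rcases List.mem_append.mp hm with hm | hm
        · exact h2 op hm
        · simp at hm
    | step i' =>
      obtain ⟨hpend, hhist⟩ := nextConfig_step_eq hnc
      rw [hpend] at hp
      obtain ⟨h1, h2⟩ := ih C0 hC0 i hnores0 hp
      refine ⟨hhist ▸ h1, ?_⟩
      intro op hm
      rcases List.mem_append.mp hm with hm | hm
      · exact h2 op hm
      · simp at hm

theorem pend_none_of_no_inv (A : Impl n S ι M) (α : List (Event n S)) :
    ∀ C, execConfig A α = some C → ∀ i, (∀ op, Event.inv i op ∉ α) →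
      C.pend i = none := by
  induction α using List.reverseRecOn with
  | nil =>
    intro C hC i _
    simp only [execConfig, List.foldlM] at hC
    cases (Option.some_inj.mp hC).symm
    rfl
  | append_singleton α e ih =>
    intro C hC i hno
    obtain ⟨C0, hC0, hnc⟩ := execConfig_some_of_concat hC
    have hno0 : ∀ op, Event.inv i op ∉ α := fun op hm =>
      hno op (List.mem_append_left _ hm)
    cases e with
    | inv i' op' =>
      obtain ⟨hpend0, hall, rfl⟩ := nextConfig_inv_eq hnc
      have hii : i ≠ i' := by
        intro h
        exact hno op' (by rw [h]; exact List.mem_append_right _ (by simp))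
      simp only [Function.update_of_ne hii]
      exact ih C0 hC0 i hno0
    | res i' r =>
      obtain ⟨_, hret, rfl⟩ := nextConfig_res_eq hnc
      by_cases hii : i = i'
      · subst hii; simp [Function.update_self]
      · simp only [Function.update_of_ne hii]
        exact ih C0 hC0 i hno0
    | step i' =>
      obtain ⟨hpend, _⟩ := nextConfig_step_eq hnc
      rw [hpend]
      exact ih C0 hC0 i hno0


theorem seqRun_mem {s : S.State} {l : List (Fin n × S.Op × S.Res)}
    (h : SeqRun S s l) : ∀ e ∈ l, ∃ s1 s2, S.δ s1 e.1 e.2.1 s2 e.2.2 := by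
  induction h with
  | nil => simp
  | cons hd tl ih =>
    intro e he
    rcases List.mem_cons.mp he with rfl | he
    · exact ⟨_, _, hd⟩
    · exact ih e he

theorem getElem?_of_prefix {γ : Type*} {l l' : List γ} (h : l <+: l') {j : ℕ}
    (hj : j < l.length) : l'[j]? = l[j]? := by
  obtain ⟨t, rfl⟩ := h; exact List.getElem?_append_left hj

/- LLContest-specific lemmas -/

theorem llNextEvent_proc {A : Impl n (LLContestSpec n) ι M} (C : Config A) (r : Fin n) :
    Event.proc (llNextEvent A C r) = r := by
  unfold llNextEvent
  cases C.pend r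
  · rfl
  · cases A.ret r (C.loc r) <;> rfl

theorem llNext_isSome {A : Impl n (LLContestSpec n) ι M} {C : Config A} {r : Fin n}
    (hall : C.pend r = none →
      (LLContestSpec n).allowed r (C.hist r)
        (if r.val = 0 then ContestOp.decide else ContestOp.compete) = true) :
    (nextConfig A C (llNextEvent A C r)).isSome = true := by
  unfold llNextEvent
  cases hp : C.pend r
  · simp only [nextConfig, hp, hall hp]
    simp
  · cases hret : A.ret r (C.loc r) <;> simp only [nextConfig, hp, hret] <;> simp

theorem sched1_eq {A : Impl n (LLContestSpec n) ι M}
    {α : List (Event n (LLContestSpec n))} {C : Config A} {r : Fin n}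
    (hC : execConfig A α = some C)
    (hs : (nextConfig A C (llNextEvent A C r)).isSome = true) :
    sched1 A α r = α ++ [llNextEvent A C r] := by
  obtain ⟨C', hC'⟩ := Option.isSome_iff_exists.mp hs
  simp only [sched1, hC, hC']

theorem closed_of_decidesVal {A : Impl n (LLContestSpec n) ι M}
    {L : List (Event n (LLContestSpec n)) → List (ℕ × (LLContestSpec n).Res)}
    {α : List (Event n (LLContestSpec n))} {x : ℕ}
    (h : DecidesVal L α x) : ClosedExec A L α := by
  intro E _ _
  refine ⟨0, x, ?_⟩
  simpa [prefE] using h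

theorem lin_decide_some {A : Impl n (LLContestSpec n) ι M}
    {L : List (Event n (LLContestSpec n)) → List (ℕ × (LLContestSpec n).Res)}
    (hLin : IsLinFun A L) {α : List (Event n (LLContestSpec n))} {j : ℕ}
    {v : (LLContestSpec n).Res} {i : Fin n}
    (hexec : IsExec A α) (hj : α[j]? = some (Event.inv i ContestOp.decide))
    (hv : (j, v) ∈ L α) : ∃ x : ℕ, v = some x := by
  obtain ⟨l, hF, hRun⟩ := (hLin α hexec).valid
  obtain ⟨m, hm, hgm⟩ := List.mem_iff_getElem.mp hv
  rw [List.forall₂_iff_get] at hF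
  have hml : m < l.length := hF.1 ▸ hm
  have hR := hF.2 m hm hml
  rw [List.get_eq_getElem, List.get_eq_getElem, hgm] at hR
  obtain ⟨hα, hv2⟩ := hR
  rw [hj] at hα
  have hop : (l[m]'hml).2.1 = ContestOp.decide := by
    simp only [Option.some_inj, Event.inv.injEq] at hα
    exact (Event.inv.inj hα).2.symm
  obtain ⟨s1, s2, hδ⟩ := seqRun_mem hRun _ (List.getElem_mem hml)
  rw [hop] at hδ
  rcases hδ with ⟨h1, -⟩ | ⟨-, -, -, -, -, x, hx, -⟩
  · exact ContestOp.noConfusion h1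
  · exact ⟨x, hv2.trans hx⟩


theorem prefix_mono {γ : Type*} (c : ℕ → List γ) (h : ∀ k, c k <+: c (k+1)) :
    ∀ k k', k ≤ k' → c k <+: c k' := by
  intro k k' hk
  induction k' with
  | zero => cases Nat.le_zero.mp hk; exact List.prefix_refl _
  | succ m ih =>
    rcases Nat.lt_or_ge k (m+1) with h' | h'
    · exact (ih (Nat.lt_succ_iff.mp h')).trans (h m)
    · cases Nat.le_antisymm hk h'; exact List.prefix_refl _

theorem chain_getElem? {γ : Type*} (c : ℕ → List γ) (d : γ)
    (hpre : ∀ k k', k ≤ k' → c k <+: c k') (hlen : ∀ k, k ≤ (c k).length)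
    {k m : ℕ} (hm : m < (c k).length) :
    (c k)[m]? = some (((c (m+1))[m]?).getD d) := by
  have hm1 : m < (c (m+1)).length := Nat.lt_of_lt_of_le (Nat.lt_succ_self m) (hlen (m+1))
  rcases le_total k (m+1) with h | h
  · rw [getElem?_of_prefix (hpre k (m+1) h) hm]
    rw [List.getElem?_eq_getElem hm]
    rfl
  · rw [getElem?_of_prefix (hpre (m+1) k h) hm1]
    rw [List.getElem?_eq_getElem hm1]
    rfl

theorem prefix_snoc {γ : Type*} {l L : List γ} {a : γ} (h : l <+: L)
    (ha : L[l.length]? = some a) : l ++ [a] <+: L := by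
  obtain ⟨t, rfl⟩ := h
  cases t with
  | nil => rw [List.append_nil, List.getElem?_eq_none (le_refl _)] at ha; cases ha
  | cons b t =>
    have hb : (l ++ b :: t)[l.length]? = some b := by
      rw [List.getElem?_append_right (le_refl _)]
      simp
    rw [hb] at ha
    cases Option.some_inj.mp ha
    exact ⟨t, by simp⟩

theorem prefE_succ {E : ℕ → Event n S} (m : ℕ) :
    prefE E (m+1) = prefE E m ++ [E m] := by
  simp [prefE, List.range_succ]


theorem isExec_nil {A : Impl n S ι M} : IsExec A [] := rfl

theorem supervalent_nil (hn : 2 ≤ n) (A : Impl n (LLContestSpec n) ι M)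
    (L : List (Event n (LLContestSpec n)) → List (ℕ × (LLContestSpec n).Res)) :
    SupervalentExec A L [] := by
  have hq1 : (1 : ℕ) < n := by omega
  set q : Fin n := ⟨1, hq1⟩ with hqdef
  have hallow : ∀ (h : List ContestOp),
      (LLContestSpec n).allowed q h
        (if q.val = 0 then ContestOp.decide else ContestOp.compete) = true := by
    intro h
    simp [LLContestSpec, hqdef]
  have hstepq : ∀ γ, ∃ e, IsExec A γ →
      (Event.proc e = q ∧ sched1 A γ q = γ ++ [e] ∧ IsExec A (γ ++ [e])) := by
    intro γ
    by_cases h : IsExec A γ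
    · obtain ⟨C, hC⟩ := Option.isSome_iff_exists.mp h
      have hs := llNext_isSome (A := A) (C := C) (r := q) (fun _ => hallow _)
      refine ⟨llNextEvent A C q, fun _ => ⟨llNextEvent_proc C q, sched1_eq hC hs, ?_⟩⟩
      unfold IsExec
      rw [execConfig_concat, hC]
      simpa using hs
    · exact ⟨Event.step q, fun hc => absurd hc h⟩
  choose ev hev using hstepq
  let c : ℕ → List (Event n (LLContestSpec n)) :=
    fun k => Nat.rec [] (fun _ l => l ++ [ev l]) k
  have hcs : ∀ k, c (k+1) = c k ++ [ev (c k)] := fun _ => rfl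
  have hexe : ∀ k, IsExec A (c k) := by
    intro k
    induction k with
    | zero => exact isExec_nil
    | succ k ih => rw [hcs]; exact (hev (c k) ih).2.2
  have hqmem : ∀ k, ∀ e ∈ c k, Event.proc e = q := by
    intro k
    induction k with
    | zero => simp [c]
    | succ k ih =>
      rw [hcs]
      intro e he
      rcases List.mem_append.mp he with h | h
      · exact ih e h
      · simp only [List.mem_singleton] at h
        subst h
        exact (hev (c k) (hexe k)).1
  have hlenq : ∀ k, (c k).length = k := by
    intro k
    induction k with
    | zero => rfl
    | succ k ih => rw [hcs]; simp [ih]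
  have hpreq : ∀ k, c k <+: c (k+1) := fun k => ⟨[ev (c k)], (hcs k).symm⟩
  have hprem := prefix_mono c hpreq
  set E : ℕ → Event n (LLContestSpec n) :=
    fun m => ((c (m+1))[m]?).getD (Event.step q) with hEdef
  have hEe : ∀ k m, m < (c k).length → (c k)[m]? = some (E m) :=
    fun k m hm => chain_getElem? c _ hprem (fun k => (hlenq k).ge) hm
  have hprefE : ∀ m, prefE E m = c m := by
    intro m
    induction m with
    | zero => rfl
    | succ m ih =>
      rw [prefE_succ, ih, hcs]
      congr 1
      have h1 := hEe (m+1) m (Nat.lt_of_lt_of_le (Nat.lt_succ_self m) (hlenq (m+1)).ge)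
      have h2 := List.getElem?_concat_length (l := c m) (a := ev (c m))
      rw [hlenq m] at h2
      rw [hcs, h2] at h1
      rw [Option.some_inj.mp h1]
  intro hclosed
  have hproc : ∀ m, (Event.proc (E m)).val ≠ 0 := by
    intro m
    have hmem : E m ∈ c (m+1) :=
      List.mem_of_getElem? (hEe (m+1) m (Nat.lt_of_lt_of_le (Nat.lt_succ_self m) (hlenq (m+1)).ge))
    rw [hqmem (m+1) _ hmem]
    exact Nat.one_ne_zero
  have hexec : ∀ m, IsExec A ([] ++ prefE E m) := by
    intro m
    rw [List.nil_append, hprefE]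
    exact hexe m
  obtain ⟨m, x, hdv⟩ := hclosed E hproc hexec
  obtain ⟨j, i, hi0, hj, -⟩ := hdv
  rw [List.nil_append, hprefE] at hj
  have hmem : Event.inv i ContestOp.decide ∈ c m := List.mem_of_getElem? hj
  have := hqmem m _ hmem
  simp only [Event.proc, hqdef] at this
  rw [this] at hi0
  simp at hi0

theorem isExec_concat_of_next {A : Impl n S ι M} {α : List (Event n S)} {C : Config A}
    {e : Event n S} (hC : execConfig A α = some C)
    (hs : (nextConfig A C e).isSome = true) : IsExec A (α ++ [e]) := by
  unfold IsExec
  rw [execConfig_concat, hC]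
  simpa using hs

end HelpingAux
theorem exists_helping_supervalent_execution' :
    ∀ (n : ℕ) (hn : 2 ≤ n) (ι : Type) (M : ι → BaseObject)
      (A : Impl n (LLContestSpec n) ι M)
      (L : List (Event n (LLContestSpec n)) → List (ℕ × (LLContestSpec n).Res)),
      WaitFree A → IsLinFun A L → PrefixClosedLin A L →
      ∃ α : List (Event n (LLContestSpec n)), IsExec A α ∧ SupervalentExec A L α ∧
        ∀ β, CompetitorsOnly β → IsExec A (α ++ β) →
          ClosedExec A L (sched A (α ++ β) [(⟨0, Nat.lt_of_lt_of_le Nat.zero_lt_two hn⟩ : Fin n)]) := by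
  intro n hn ι M A L hWF hLin hPC
  by_contra hcon
  push_neg at hcon
  have hn0 : 0 < n := by omega
  set p : Fin n := ⟨0, hn0⟩ with hpdef
  -- the one-step extension lemma
  have hstep : ∀ α : List (Event n (LLContestSpec n)),
      IsExec A α → SupervalentExec A L α →
      (∀ e ∈ α, (Event.proc e).val = 0 →
        e = Event.inv p ContestOp.decide ∨ e = Event.step p) →
      ∃ γ e, (IsExec A (γ ++ [e]) ∧ SupervalentExec A L (γ ++ [e]) ∧
          (∀ e' ∈ γ ++ [e], (Event.proc e').val = 0 →
            e' = Event.inv p ContestOp.decide ∨ e' = Event.step p)) ∧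
        α <+: γ ∧ (e = Event.inv p ContestOp.decide ∨ e = Event.step p) ∧
        (e = Event.step p ↔ Event.inv p ContestOp.decide ∈ α) := by
    intro α hex hsup honly
    obtain ⟨β, hβc, hβe, hsup'⟩ := hcon α hex hsup
    obtain ⟨C, hC⟩ := Option.isSome_iff_exists.mp hβe
    have honlyγ : ∀ e' ∈ α ++ β, (Event.proc e').val = 0 →
        e' = Event.inv p ContestOp.decide ∨ e' = Event.step p := by
      intro e' he' h0
      rcases List.mem_append.mp he' with h | h
      · exact honly e' h h0
      · exact absurd h0 (hβc e' h)
    have hnores : ∀ r', Event.res p r' ∉ α ++ β := by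
      intro r' hm
      rcases honlyγ _ hm rfl with h | h <;> cases h
    have hwrap : ∀ e : Event n (LLContestSpec n),
        sched1 A (α ++ β) p = (α ++ β) ++ [e] →
        ¬ ClosedExec A L ((α ++ β) ++ [e]) := by
      intro e hsch hcl
      apply hsup'
      have : sched A (α ++ β) [(⟨0, by omega⟩ : Fin n)] = (α ++ β) ++ [e] := hsch
      rw [this]
      exact hcl
    cases hp : C.pend p with
    | none =>
      obtain ⟨hhist, hnoinv⟩ := pend_none_hist_nil A (α ++ β) C hC p hnores hp
      have hallow : (LLContestSpec n).allowed p (C.hist p)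
          (if p.val = 0 then ContestOp.decide else ContestOp.compete) = true := by
        rw [hhist]
        simp [LLContestSpec, hpdef]
      have hs := llNext_isSome (A := A) (C := C) (r := p) (fun _ => hallow)
      have heq : llNextEvent A C p = Event.inv p ContestOp.decide := by
        unfold llNextEvent
        rw [hp]
        simp [hpdef]
      have hsch := sched1_eq hC hs
      rw [heq] at hsch hs
      refine ⟨α ++ β, Event.inv p ContestOp.decide,
        ⟨isExec_concat_of_next hC hs, hwrap _ hsch, ?_⟩, ⟨β, rfl⟩, Or.inl rfl, ?_⟩
      · intro e' he' h0
        rcases List.mem_append.mp he' with h | h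
        · exact honlyγ e' h h0
        · simp only [List.mem_singleton] at h
          exact Or.inl h
      · refine iff_of_false (fun h => by cases h) (fun hmem => ?_)
        exact hnoinv _ (List.mem_append_left β hmem)
    | some op =>
      obtain ⟨j, hj, hno⟩ := pend_some_lastInv A (α ++ β) C hC p op hp
      have hmemj : Event.inv p op ∈ α ++ β := List.mem_of_getElem? hj
      have hopdec : op = ContestOp.decide := by
        rcases honlyγ _ hmemj rfl with h | h
        · exact (Event.inv.inj h).2
        · cases h
      subst hopdec
      have hinvα : Event.inv p ContestOp.decide ∈ α := by
        rcases List.mem_append.mp hmemj with h | h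
        · exact h
        · exact absurd rfl (hβc _ h)
      cases hret : A.ret p (C.loc p) with
      | none =>
        have heq : llNextEvent A C p = Event.step p := by
          unfold llNextEvent
          rw [hp, hret]
        have hs : (nextConfig A C (llNextEvent A C p)).isSome = true := by
          rw [heq]
          simp only [nextConfig, hp, hret]
          simp
        have hsch := sched1_eq hC hs
        rw [heq] at hsch hs
        refine ⟨α ++ β, Event.step p,
          ⟨isExec_concat_of_next hC hs, hwrap _ hsch, ?_⟩, ⟨β, rfl⟩, Or.inr rfl,
          iff_of_true rfl hinvα⟩
        intro e' he' h0
        rcases List.mem_append.mp he' with h | h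
        · exact honlyγ e' h h0
        · simp only [List.mem_singleton] at h
          exact Or.inr h
      | some v =>
        exfalso
        have heq : llNextEvent A C p = Event.res p v := by
          unfold llNextEvent
          rw [hp, hret]
        have hs : (nextConfig A C (llNextEvent A C p)).isSome = true := by
          rw [heq]
          simp only [nextConfig, hp, hret]
          simp
        have hsch := sched1_eq hC hs
        rw [heq] at hsch hs
        have hexec' : IsExec A ((α ++ β) ++ [Event.res p v]) :=
          isExec_concat_of_next hC hs
        have hjlt : j < (α ++ β).length := (List.getElem?_eq_some_iff.mp hj).1
        have hj' : ((α ++ β) ++ [Event.res p v])[j]? =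
            some (Event.inv p ContestOp.decide) := by
          rw [List.getElem?_append_left hjlt]
          exact hj
        have hmatch : Matches ((α ++ β) ++ [Event.res p v]) j (α ++ β).length v := by
          refine ⟨p, ContestOp.decide, hj', by rw [List.getElem?_concat_length], hjlt, ?_⟩
          intro m hm1 hm2 r'
          rw [List.getElem?_append_left hm2]
          exact hno m hm1 r'
        have hmem := (hLin _ hexec').complete_mem j (α ++ β).length v hmatch
        obtain ⟨x, rfl⟩ := lin_decide_some hLin hexec' hj' hmem
        have hdec : DecidesVal L ((α ++ β) ++ [Event.res p (some x)]) x := ⟨j, p, rfl, hj', hmem⟩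
        exact hwrap _ hsch (closed_of_decidesVal hdec)
  -- totalize the step lemma and iterate it by choice
  have hstep2 : ∀ α : List (Event n (LLContestSpec n)),
      ∃ ge : List (Event n (LLContestSpec n)) × Event n (LLContestSpec n),
        (IsExec A α ∧ SupervalentExec A L α ∧
          (∀ e ∈ α, (Event.proc e).val = 0 →
            e = Event.inv p ContestOp.decide ∨ e = Event.step p)) →
        ((IsExec A (ge.1 ++ [ge.2]) ∧ SupervalentExec A L (ge.1 ++ [ge.2]) ∧
            (∀ e' ∈ ge.1 ++ [ge.2], (Event.proc e').val = 0 →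
              e' = Event.inv p ContestOp.decide ∨ e' = Event.step p)) ∧
          α <+: ge.1 ∧ (ge.2 = Event.inv p ContestOp.decide ∨ ge.2 = Event.step p) ∧
          (ge.2 = Event.step p ↔ Event.inv p ContestOp.decide ∈ α)) := by
    intro α
    by_cases h : IsExec A α ∧ SupervalentExec A L α ∧
        (∀ e ∈ α, (Event.proc e).val = 0 →
          e = Event.inv p ContestOp.decide ∨ e = Event.step p)
    · obtain ⟨γ, e, hg⟩ := hstep α h.1 h.2.1 h.2.2
      exact ⟨(γ, e), fun _ => hg⟩
    · exact ⟨([], Event.step p), fun hc => absurd hc h⟩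
  choose f hf using hstep2
  let c : ℕ → List (Event n (LLContestSpec n)) :=
    fun k => Nat.rec [] (fun _ l => (f l).1 ++ [(f l).2]) k
  have hcs : ∀ k, c (k+1) = (f (c k)).1 ++ [(f (c k)).2] := fun _ => rfl
  have hgood : ∀ k, IsExec A (c k) ∧ SupervalentExec A L (c k) ∧
      (∀ e ∈ c k, (Event.proc e).val = 0 →
        e = Event.inv p ContestOp.decide ∨ e = Event.step p) := by
    intro k
    induction k with
    | zero =>
      exact ⟨isExec_nil, supervalent_nil hn A L,
        fun e he => absurd he List.not_mem_nil⟩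
    | succ k ih => exact (hf (c k) ih).1
  have hprops : ∀ k, c k <+: (f (c k)).1 ∧
      ((f (c k)).2 = Event.inv p ContestOp.decide ∨ (f (c k)).2 = Event.step p) ∧
      ((f (c k)).2 = Event.step p ↔ Event.inv p ContestOp.decide ∈ c k) :=
    fun k => (hf (c k) (hgood k)).2
  have hpre : ∀ k, c k <+: c (k+1) := by
    intro k
    rw [hcs]
    exact (hprops k).1.trans ⟨[(f (c k)).2], rfl⟩
  have hprem := prefix_mono c hpre
  have hlen : ∀ k, k ≤ (c k).length := by
    intro k
    induction k with
    | zero => exact Nat.zero_le _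
    | succ k ih =>
      rw [hcs]
      have h1 := (hprops k).1.length_le
      simp only [List.length_append, List.length_singleton]
      omega
  set E : ℕ → Event n (LLContestSpec n) :=
    fun m => ((c (m+1))[m]?).getD (Event.step p) with hEdef
  have hEe : ∀ k m, m < (c k).length → (c k)[m]? = some (E m) :=
    fun k m hm => chain_getElem? c _ hprem hlen hm
  have hpref : ∀ m, prefE E m <+: c m := by
    intro m
    induction m with
    | zero => exact ⟨c 0, rfl⟩
    | succ m ih =>
      rw [prefE_succ]
      refine prefix_snoc (ih.trans (hpre m)) ?_
      have hlenpe : (prefE E m).length = m := by simp [prefE]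
      rw [hlenpe]
      exact hEe (m+1) m (Nat.lt_of_lt_of_le (Nat.lt_succ_self m) (hlen (m+1)))
  have hEexec : ∀ m, IsExec A (prefE E m) := by
    intro m
    obtain ⟨t, ht⟩ := hpref m
    exact isExec_append_left (ht ▸ (hgood m).1)
  have hinv1 : Event.inv p ContestOp.decide ∈ c 1 := by
    have h1 : c 1 = (f (c 0)).1 ++ [(f (c 0)).2] := rfl
    rcases (hprops 0).2.1 with h | h
    · rw [h1]
      exact List.mem_append_right _ (h ▸ List.mem_singleton_self _)
    · exact absurd
        (show Event.inv p ContestOp.decide ∈ ([] : List (Event n (LLContestSpec n)))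
          from (hprops 0).2.2.mp h)
        List.not_mem_nil
  have hinvk : ∀ k, 1 ≤ k → Event.inv p ContestOp.decide ∈ c k :=
    fun k hk => (hprem 1 k hk).subset hinv1
  have hstepk : ∀ k, 1 ≤ k → (f (c k)).2 = Event.step p :=
    fun k hk => (hprops k).2.2.mpr (hinvk k hk)
  have hinf : ∀ m, ∃ m', m ≤ m' ∧ E m' = Event.step p := by
    intro m
    have hck : c (m+1+1) = (f (c (m+1))).1 ++ [(f (c (m+1))).2] := hcs (m+1)
    have hjlt : ((f (c (m+1))).1).length < (c (m+1+1)).length := by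
      rw [hck]
      simp
    have h1 : (c (m+1+1))[((f (c (m+1))).1).length]? = some ((f (c (m+1))).2) := by
      rw [hck]
      exact List.getElem?_concat_length
    have h2 := hEe (m+1+1) _ hjlt
    rw [h1] at h2
    refine ⟨((f (c (m+1))).1).length, ?_, ?_⟩
    · have hA := hlen (m+1)
      have hB := (hprops (m+1)).1.length_le
      omega
    · rw [← Option.some_inj.mp h2]
      exact hstepk (m+1) (by omega)
  obtain ⟨m', -, r, hres⟩ := hWF E hEexec p hinf 0
  have hmem : E m' ∈ c (m'+1) :=
    List.mem_of_getElem?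
      (hEe (m'+1) m' (Nat.lt_of_lt_of_le (Nat.lt_succ_self m') (hlen (m'+1))))
  rw [hres] at hmem
  rcases (hgood (m'+1)).2.2 _ hmem rfl with h | h <;> cases h

/-- (Lemma `helping`.) Any wait-free strongly linearizable
implementation `A` of the long-lived contest object (with prefix-closed linearization
function `L`) has a helping supervalent execution: a supervalent execution `α` such
that for every competitors-only extension `β` of `α`, the execution `αβp` (extending
by the next step of the referee `p`) is closed. -/
theorem exists_helping_supervalent_execution :
    ∀ (n : ℕ) (hn : 2 ≤ n) (ι : Type) (M : ι → BaseObject)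
      (A : Impl n (LLContestSpec n) ι M)
      (L : List (Event n (LLContestSpec n)) → List (ℕ × (LLContestSpec n).Res)),
      WaitFree A → IsLinFun A L → PrefixClosedLin A L →
      ∃ α : List (Event n (LLContestSpec n)), IsExec A α ∧ SupervalentExec A L α ∧
        ∀ β, CompetitorsOnly β → IsExec A (α ++ β) →
          ClosedExec A L (sched A (α ++ β) [(⟨0, by omega⟩ : Fin n)]) := by
  exact exists_helping_supervalent_execution'
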